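/- Let p be an odd prime and n an integer with p + p < n. Let x be a p-cycle in the alternating group Alt_n. Then the commuting graph on the conjugacy class of x in Alt_n is connected. -/

import Mathlib

open SimpleGraph

def commGraph {G : Type*} [Group G] (X : Set G) : SimpleGraph X where
  Adj a b := a ≠ b ∧ (a : G) * (b : G) = (b : G) * (a : G)
  symm := ⟨fun a b h => ⟨h.1.symm, h.2.symm⟩⟩
  loopless := ⟨fun a h => h.1 rfl⟩

def compSet {G : Type*} [Group G] (X : Set G) (x : G) (hx : x ∈ X) : Set G :=
  {y : G | ∃ hy : y ∈ X, (commGraph X).Reachable ⟨x, hx⟩ ⟨y, hy⟩}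

def conjStab {G : Type*} [Group G] (X : Set G) (x : G) (hx : x ∈ X) : Set G :=
  {g : G | (fun y => g⁻¹ * y * g) '' compSet X x hx = compSet X x hx}

namespace CommGraphAux

open Equiv Equiv.Perm

variable {n : ℕ}

lemma cycle_of_finset (S : Finset (Fin n)) (h2 : 2 ≤ S.card) :
    ∃ y : Equiv.Perm (Fin n), y.IsCycle ∧ y.support = S := by
  refine ⟨S.toList.formPerm, List.isCycle_formPerm S.nodup_toList (by simpa using h2), ?_⟩
  rw [List.support_formPerm_of_nodup _ S.nodup_toList, Finset.toList_toFinset]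
  intro a ha
  have := congrArg List.length ha
  simp [Finset.length_toList] at this
  omega

lemma cycle_mem_alt {p : ℕ} (hodd : Odd p) {y : Equiv.Perm (Fin n)} (hy : y.IsCycle)
    (hc : y.support.card = p) : y ∈ alternatingGroup (Fin n) := by
  rw [Equiv.Perm.mem_alternatingGroup, hy.sign, hc, hodd.neg_one_pow]
  simp

lemma mem_class_iff {p : ℕ} (hp2 : 2 ≤ p) (hn : p + 2 ≤ n)
    (x : Equiv.Perm (Fin n)) (hcyc : x.IsCycle) (hcard : x.support.card = p)
    (hx : x ∈ alternatingGroup (Fin n)) (y : alternatingGroup (Fin n)) :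
    IsConj (⟨x, hx⟩ : alternatingGroup (Fin n)) y ↔
      (y : Equiv.Perm (Fin n)).IsCycle ∧ (y : Equiv.Perm (Fin n)).support.card = p := by
  constructor
  · intro h
    obtain ⟨c0, hc0⟩ := isConj_iff.mp h
    have hc' : (c0 : Equiv.Perm (Fin n)) * x * (c0 : Equiv.Perm (Fin n))⁻¹
        = (y : Equiv.Perm (Fin n)) := by
      have := congrArg (Subtype.val) hc0
      simpa using this
    obtain ⟨c, hc⟩ : ∃ c : Equiv.Perm (Fin n), c * x * c⁻¹ = (y : Equiv.Perm (Fin n)) :=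
      ⟨c0, hc'⟩
    constructor
    · rw [← hc]; exact hcyc.conj
    · rw [← hc, Equiv.Perm.support_conj, Finset.card_map, hcard]
  · rintro ⟨hyc, hycard⟩
    obtain ⟨c, hc⟩ := isConj_iff.mp (hcyc.isConj hyc (hcard.trans hycard.symm))
    have hcompl : 1 < x.supportᶜ.card := by
      rw [Finset.card_compl]
      simp only [hcard, Fintype.card_fin]
      omega
    obtain ⟨a, ha, b, hb, hab⟩ := Finset.one_lt_card.mp hcompl
    simp only [Finset.mem_compl] at ha hb
    have hd : (Equiv.swap a b).Disjoint x := by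
      rw [Equiv.Perm.disjoint_iff_disjoint_support, Equiv.Perm.support_swap hab]
      rw [Finset.disjoint_left]
      intro u hu
      rcases Finset.mem_insert.mp hu with h | h
      · subst h; exact ha
      · rw [Finset.mem_singleton] at h; subst h; exact hb
    have hτx : Equiv.swap a b * x * (Equiv.swap a b)⁻¹ = x := by
      rw [hd.commute.eq, mul_inv_cancel_right]
    obtain ⟨g, hg1, hgc⟩ : ∃ g : Equiv.Perm (Fin n),
        Equiv.Perm.sign g = 1 ∧ g * x * g⁻¹ = (y : Equiv.Perm (Fin n)) := by
      rcases Int.units_eq_one_or (Equiv.Perm.sign c) with h | h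
      · exact ⟨c, h, hc⟩
      · refine ⟨c * Equiv.swap a b, ?_, ?_⟩
        · rw [map_mul, h, Equiv.Perm.sign_swap hab]; norm_num
        · rw [show c * Equiv.swap a b * x * (c * Equiv.swap a b)⁻¹
            = c * (Equiv.swap a b * x * (Equiv.swap a b)⁻¹) * c⁻¹ by group, hτx, hc]
    refine isConj_iff.mpr ⟨⟨g, Equiv.Perm.mem_alternatingGroup.mpr hg1⟩, ?_⟩
    exact Subtype.ext (by simpa using hgc)

end CommGraphAux

theorem commGraph_conjClass_pCycle_connected
    (p n : ℕ) (hp : p.Prime) (hodd : Odd p) (hn : p + p < n)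
    (x : Equiv.Perm (Fin n)) (hcyc : x.IsCycle) (hcard : x.support.card = p)
    (hx : x ∈ alternatingGroup (Fin n)) :
    (commGraph {y : ↥(alternatingGroup (Fin n)) |
        IsConj (⟨x, hx⟩ : ↥(alternatingGroup (Fin n))) y}).Connected := by
  classical
  have hp3 : 3 ≤ p := by
    rcases hodd with ⟨k, hk⟩
    have := hp.two_le
    omega
  set X : Set ↥(alternatingGroup (Fin n)) :=
    {y : ↥(alternatingGroup (Fin n)) | IsConj (⟨x, hx⟩ : ↥(alternatingGroup (Fin n))) y} with hX
  have hmem : ∀ y : ↥(alternatingGroup (Fin n)), y ∈ X ↔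
      (y : Equiv.Perm (Fin n)).IsCycle ∧ (y : Equiv.Perm (Fin n)).support.card = p :=
    fun y => CommGraphAux.mem_class_iff hp.two_le (by omega) x hcyc hcard hx y
  have hXof : ∀ S : Finset (Fin n), S.card = p → ∃ y : ↥(alternatingGroup (Fin n)),
      y ∈ X ∧ (y : Equiv.Perm (Fin n)).support = S := by
    intro S hS
    obtain ⟨w, hwc, hws⟩ := CommGraphAux.cycle_of_finset S (by omega)
    have hwp : w.support.card = p := by rw [hws, hS]
    exact ⟨⟨w, CommGraphAux.cycle_mem_alt hodd hwc hwp⟩, (hmem _).mpr ⟨hwc, hwp⟩, hws⟩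
  have hreach_disj : ∀ (y z : ↥(alternatingGroup (Fin n))) (hy : y ∈ X) (hz : z ∈ X),
      Disjoint (y : Equiv.Perm (Fin n)).support (z : Equiv.Perm (Fin n)).support →
      (commGraph X).Reachable ⟨y, hy⟩ ⟨z, hz⟩ := by
    intro y z hy hz hd
    by_cases h : (⟨y, hy⟩ : X) = ⟨z, hz⟩
    · rw [h]
    · refine SimpleGraph.Adj.reachable (show _ ∧ _ from ⟨h, ?_⟩)
      have hc := (Equiv.Perm.disjoint_iff_disjoint_support.mpr hd).commute.eq
      exact Subtype.ext (by simpa using hc)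
  have hstep : ∀ (y z : ↥(alternatingGroup (Fin n))) (hy : y ∈ X) (hz : z ∈ X),
      ((y : Equiv.Perm (Fin n)).support ∪ (z : Equiv.Perm (Fin n)).support).card + p ≤ n →
      (commGraph X).Reachable ⟨y, hy⟩ ⟨z, hz⟩ := by
    intro y z hy hz hun
    obtain ⟨S, hSsub, hScard⟩ := Finset.exists_subset_card_eq
      (s := ((y : Equiv.Perm (Fin n)).support ∪ (z : Equiv.Perm (Fin n)).support)ᶜ) (n := p)
      (by rw [Finset.card_compl, Fintype.card_fin]; omega)
    obtain ⟨w, hwX, hws⟩ := hXof S hScard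
    have hd : Disjoint ((y : Equiv.Perm (Fin n)).support ∪ (z : Equiv.Perm (Fin n)).support) S :=
      (disjoint_compl_right.mono_right hSsub)
    obtain ⟨hd1, hd2⟩ := Finset.disjoint_union_left.mp hd
    refine (hreach_disj y w hy hwX ?_).trans (hreach_disj w z hwX hz ?_)
    · rw [hws]; exact hd1
    · rw [hws]; exact hd2.symm
  have main : ∀ (k : ℕ) (y z : ↥(alternatingGroup (Fin n))) (hy : y ∈ X) (hz : z ∈ X),
      ((y : Equiv.Perm (Fin n)).support \ (z : Equiv.Perm (Fin n)).support).card ≤ k →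
      (commGraph X).Reachable ⟨y, hy⟩ ⟨z, hz⟩ := by
    intro k
    induction k with
    | zero =>
      intro y z hy hz hk
      have hy' := (hmem y).mp hy
      have hz' := (hmem z).mp hz
      have hsub : (y : Equiv.Perm (Fin n)).support ⊆ (z : Equiv.Perm (Fin n)).support := by
        rw [← Finset.sdiff_eq_empty_iff_subset]
        exact Finset.card_eq_zero.mp (Nat.le_antisymm hk (Nat.zero_le _))
      have heq : (y : Equiv.Perm (Fin n)).support = (z : Equiv.Perm (Fin n)).support :=
        Finset.eq_of_subset_of_card_le hsub (by rw [hy'.2, hz'.2])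
      apply hstep y z hy hz
      rw [heq, Finset.union_self, hz'.2]
      omega
    | succ m ih =>
      intro y z hy hz hk
      have hy' := (hmem y).mp hy
      have hz' := (hmem z).mp hz
      by_cases hle : ((y : Equiv.Perm (Fin n)).support \ (z : Equiv.Perm (Fin n)).support).card ≤ m
      · exact ih y z hy hz hle
      push_neg at hle
      have hpos : 0 < ((y : Equiv.Perm (Fin n)).support \ (z : Equiv.Perm (Fin n)).support).card := by
        omega
      obtain ⟨b, hbmem⟩ := Finset.card_pos.mp hpos
      have hTScard : ((z : Equiv.Perm (Fin n)).support \ (y : Equiv.Perm (Fin n)).support).card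
          = ((y : Equiv.Perm (Fin n)).support \ (z : Equiv.Perm (Fin n)).support).card :=
        Finset.card_sdiff_comm (by rw [hy'.2, hz'.2])
      have hpos2 : 0 < ((z : Equiv.Perm (Fin n)).support \ (y : Equiv.Perm (Fin n)).support).card := by
        omega
      obtain ⟨a, hamem⟩ := Finset.card_pos.mp hpos2
      have hbmem' := Finset.mem_sdiff.mp hbmem
      have hamem' := Finset.mem_sdiff.mp hamem
      have haS : a ∉ (y : Equiv.Perm (Fin n)).support := hamem'.2
      set S' := insert a ((y : Equiv.Perm (Fin n)).support.erase b) with hS'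
      have hScard' : S'.card = p := by
        rw [hS', Finset.card_insert_of_notMem (fun h => haS (Finset.mem_of_mem_erase h)),
          Finset.card_erase_of_mem hbmem'.1, hy'.2]
        omega
      obtain ⟨w, hwX, hws⟩ := hXof S' hScard'
      have r1 : (commGraph X).Reachable ⟨y, hy⟩ ⟨w, hwX⟩ := by
        apply hstep
        have hsub : (y : Equiv.Perm (Fin n)).support ∪ (w : Equiv.Perm (Fin n)).support
            ⊆ insert a (y : Equiv.Perm (Fin n)).support := by
          rw [hws, hS']
          intro u hu
          rcases Finset.mem_union.mp hu with h | h
          · exact Finset.mem_insert_of_mem h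
          · rcases Finset.mem_insert.mp h with h | h
            · rw [h]; exact Finset.mem_insert_self a _
            · exact Finset.mem_insert_of_mem (Finset.mem_of_mem_erase h)
        have hcardle := Finset.card_le_card hsub
        have hins : (insert a (y : Equiv.Perm (Fin n)).support).card ≤ p + 1 := by
          rw [Finset.card_insert_of_notMem haS, hy'.2]
        omega
      have r2 : (commGraph X).Reachable ⟨w, hwX⟩ ⟨z, hz⟩ := by
        apply ih
        have hsub : (w : Equiv.Perm (Fin n)).support \ (z : Equiv.Perm (Fin n)).support
            ⊆ ((y : Equiv.Perm (Fin n)).support \ (z : Equiv.Perm (Fin n)).support).erase b := by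
          rw [hws, hS']
          intro u hu
          rw [Finset.mem_sdiff] at hu
          rcases Finset.mem_insert.mp hu.1 with h | h
          · exact absurd (h ▸ hamem'.1) hu.2
          · exact Finset.mem_erase.mpr ⟨(Finset.mem_erase.mp h).1,
              Finset.mem_sdiff.mpr ⟨Finset.mem_of_mem_erase h, hu.2⟩⟩
        have h1 := Finset.card_le_card hsub
        have h2 := Finset.card_erase_of_mem hbmem
        omega
      exact r1.trans r2
  haveI : Nonempty ↑X := ⟨⟨⟨x, hx⟩, IsConj.refl _⟩⟩
  refine ⟨?_⟩
  rintro ⟨y, hy⟩ ⟨z, hz⟩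
  refine main p y z hy hz ?_
  have hy' := (hmem y).mp hy
  calc ((y : Equiv.Perm (Fin n)).support \ (z : Equiv.Perm (Fin n)).support).card
      ≤ (y : Equiv.Perm (Fin n)).support.card := Finset.card_le_card (Finset.sdiff_subset)
    _ = p := hy'.2
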